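/- Let ω : [0,1] → [0,2] be a concave increasing modulus of continuity with ω(0) = 0, let φ : 𝔻 → 𝔻 be analytic, real-valued on (−1,1), with 1 − φ(r) ≤ ω(1−r) for 0 ≤ r < 1 and φ(0) < 1. Fix 0 < σ < 1 and define u₀ = 0 and, inductively, uⱼ₊₁ ∈ (uⱼ, 1) with 1 − φ(uⱼ₊₁) = σ(1 − φ(uⱼ)) (possible by the intermediate value theorem since φ(r) → 1 as r → 1). Then with vⱼ = φ(uⱼ) and a = 1 − φ(0), one has 1 − vₙ = a σⁿ and (1−uⱼ²)/(1−vⱼ²) ≥ (1/2) ω^{-1}(a σⁿ)/(a σⁿ) for 1 ≤ j ≤ n. -/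

import Mathlib

open Complex Metric Set

set_option maxHeartbeats 1000000 in
/-- For an `ω`-radial symbol `φ` and the points `uⱼ` defined inductively by
`1 − φ(u_{j+1}) = σ(1 − φ(uⱼ))`, with `vⱼ = φ(uⱼ)` and `a = 1 − φ(0)`, one has
`1 − vₙ = a σⁿ` and `(1−uⱼ²)/(1−vⱼ²) ≥ (1/2) ω^{-1}(aσⁿ)/(aσⁿ)` for `1 ≤ j ≤ n`. -/
theorem omega_radial_points_estimate
    (ω ωinv : ℝ → ℝ)
    (hω_mono : MonotoneOn ω (Set.Icc (0:ℝ) 1))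
    (hω_concave : ConcaveOn ℝ (Set.Icc (0:ℝ) 1) ω)
    (hω_cont : ContinuousOn ω (Set.Icc (0:ℝ) 1))
    (hω_zero : ω 0 = 0)
    (hω_range : Set.MapsTo ω (Set.Icc (0:ℝ) 1) (Set.Icc (0:ℝ) 2))
    (hωinv_left : ∀ x ∈ Set.Icc (0:ℝ) 1, ωinv (ω x) = x)
    (hωinv_right : ∀ y ∈ Set.Icc (0:ℝ) (ω 1), ω (ωinv y) = y)
    (φ : ℂ → ℂ)
    (hφd : DifferentiableOn ℂ φ (ball (0:ℂ) 1))
    (hφm : MapsTo φ (ball (0:ℂ) 1) (ball (0:ℂ) 1))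
    (hφ_real : ∀ x : ℝ, -1 < x → x < 1 → (φ (x : ℂ)).im = 0)
    (hφ_radial : ∀ r : ℝ, 0 ≤ r → r < 1 → 1 - (φ (r : ℂ)).re ≤ ω (1 - r))
    (hφ0 : (φ 0).re < 1)
    (σ : ℝ) (hσ : σ ∈ Set.Ioo (0:ℝ) 1)
    (u : ℕ → ℝ) (hu0 : u 0 = 0)
    (hu_incr : ∀ j : ℕ, u j < u (j + 1))
    (hu_lt : ∀ j : ℕ, u j < 1)
    (hu_rec : ∀ j : ℕ, 1 - (φ ((u (j + 1) : ℝ) : ℂ)).re = σ * (1 - (φ ((u j : ℝ) : ℂ)).re))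
    (a : ℝ) (ha : a = 1 - (φ 0).re)
    (n : ℕ) (hn : 1 ≤ n) :
    1 - (φ ((u n : ℝ) : ℂ)).re = a * σ ^ n ∧
      ∀ j : ℕ, 1 ≤ j → j ≤ n →
        (1 / 2) * (ωinv (a * σ ^ n) / (a * σ ^ n)) ≤
          (1 - (u j) ^ 2) / (1 - ((φ ((u j : ℝ) : ℂ)).re) ^ 2) := by
  obtain ⟨hσ0, hσ1⟩ := hσ
  have ha_pos : 0 < a := by rw [ha]; linarith
  -- nonnegativity of u
  have hu_nonneg : ∀ j, 0 ≤ u j := by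
    intro j
    induction j with
    | zero => simp [hu0]
    | succ k ih => exact ih.trans (hu_incr k).le
  -- values v j in (-1,1)
  have hv_mem : ∀ j, -1 < (φ ((u j : ℝ) : ℂ)).re ∧ (φ ((u j : ℝ) : ℂ)).re < 1 := by
    intro j
    have hmem : ((u j : ℝ) : ℂ) ∈ ball (0:ℂ) 1 := by
      simp [Metric.mem_ball, Complex.norm_real, _root_.abs_of_nonneg (hu_nonneg j), hu_lt j]
    have h2 := hφm hmem
    rw [mem_ball_zero_iff] at h2
    have habs : |(φ ((u j : ℝ) : ℂ)).re| < 1 :=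
      lt_of_le_of_lt (Complex.abs_re_le_norm _) h2
    exact abs_lt.mp habs
  -- the recursion formula
  have hva : ∀ j, 1 - (φ ((u j : ℝ) : ℂ)).re = a * σ ^ j := by
    intro j
    induction j with
    | zero => simp [hu0, ha]
    | succ k ih => rw [hu_rec k, ih]; ring
  -- injectivity of ω on [0,1]
  have hinj : ∀ x ∈ Set.Icc (0:ℝ) 1, ∀ y ∈ Set.Icc (0:ℝ) 1, ω x = ω y → x = y := by
    intro x hx y hy h
    rw [← hωinv_left x hx, ← hωinv_left y hy, h]
  -- surjectivity via IVT
  have hsurj : ∀ y ∈ Set.Icc (0:ℝ) (ω 1), ∃ x ∈ Set.Icc (0:ℝ) 1, ω x = y := by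
    intro y hy
    have h := intermediate_value_Icc (zero_le_one) hω_cont
    rw [hω_zero] at h
    obtain ⟨x, hx, hxy⟩ := h hy
    exact ⟨x, hx, hxy⟩
  have hωinv_spec : ∀ y ∈ Set.Icc (0:ℝ) (ω 1), ωinv y ∈ Set.Icc (0:ℝ) 1 ∧ ω (ωinv y) = y := by
    intro y hy
    obtain ⟨x, hx, hxy⟩ := hsurj y hy
    have hxeq : ωinv y = x := by rw [← hxy, hωinv_left x hx]
    rw [hxeq]; exact ⟨hx, hxy⟩
  have hωinv_le : ∀ y ∈ Set.Icc (0:ℝ) (ω 1), ∀ r ∈ Set.Icc (0:ℝ) 1, y ≤ ω r → ωinv y ≤ r := by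
    intro y hy r hr hyr
    obtain ⟨hx, hωx⟩ := hωinv_spec y hy
    by_contra h
    push_neg at h
    have h1 : ω r ≤ ω (ωinv y) := hω_mono hr hx h.le
    have h2 : ω r = ω (ωinv y) := le_antisymm h1 (by rw [hωx]; exact hyr)
    have := hinj r hr (ωinv y) hx h2
    linarith
  -- monotonicity of t ↦ ωinv t / t
  have hratio : ∀ s t : ℝ, 0 < s → s ≤ t → t ≤ ω 1 → ωinv s / s ≤ ωinv t / t := by
    intro s t hs hst htω
    have ht : 0 < t := hs.trans_le hst
    obtain ⟨hxmem, hωx⟩ := hωinv_spec t ⟨ht.le, htω⟩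
    set x := ωinv t with hx
    set lam := s / t with hlam
    have hlam0 : 0 < lam := div_pos hs ht
    have hlam1 : lam ≤ 1 := (div_le_one ht).mpr hst
    have hlx : lam * x ∈ Set.Icc (0:ℝ) 1 :=
      ⟨mul_nonneg hlam0.le hxmem.1, by nlinarith [hxmem.1, hxmem.2]⟩
    have h0mem : (0:ℝ) ∈ Set.Icc (0:ℝ) 1 := ⟨le_refl 0, zero_le_one⟩
    have hcon := hω_concave.2 hxmem h0mem hlam0.le (by linarith : (0:ℝ) ≤ 1 - lam) (by ring)
    simp only [smul_eq_mul, mul_zero, add_zero, hω_zero] at hcon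
    have hs_le : s ≤ ω (lam * x) := by
      have hse : lam * ω x = s := by
        rw [hωx, hlam]; field_simp
      linarith
    have h1 : ωinv s ≤ lam * x :=
      hωinv_le s ⟨hs.le, hst.trans htω⟩ (lam * x) hlx hs_le
    calc ωinv s / s ≤ (lam * x) / s := by
          gcongr
      _ = x / t := by rw [hlam]; field_simp
  refine ⟨hva n, ?_⟩
  intro j hj1 hjn
  set U := u j with hU
  set V := (φ ((U : ℝ) : ℂ)).re with hV
  obtain ⟨hVl, hVr⟩ := hv_mem j
  have hU0 : 0 ≤ U := hu_nonneg j
  have hU1 : U < 1 := hu_lt j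
  set s := a * σ ^ n with hs_def
  set t := a * σ ^ j with ht_def
  have hs_pos : 0 < s := mul_pos ha_pos (pow_pos hσ0 n)
  have ht_pos : 0 < t := mul_pos ha_pos (pow_pos hσ0 j)
  have ht_eq : 1 - V = t := hva j
  have hst : s ≤ t := by
    have := pow_le_pow_of_le_one hσ0.le hσ1.le hjn
    exact mul_le_mul_of_nonneg_left this ha_pos.le
  have h1uj : 1 - U ∈ Set.Icc (0:ℝ) 1 := ⟨by linarith, by linarith⟩
  have hrad : 1 - V ≤ ω (1 - U) := hφ_radial U hU0 hU1
  have h1mem : (1:ℝ) ∈ Set.Icc (0:ℝ) 1 := ⟨zero_le_one, le_refl 1⟩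
  have htω : t ≤ ω 1 := by
    have h2 : ω (1 - U) ≤ ω 1 := hω_mono h1uj h1mem (by linarith)
    linarith [ht_eq ▸ hrad]
  have hratio_app : ωinv s / s ≤ ωinv t / t := hratio s t hs_pos hst htω
  have hωinvt : ωinv t ≤ 1 - U :=
    hωinv_le t ⟨ht_pos.le, htω⟩ (1 - U) h1uj (ht_eq ▸ hrad)
  have hstep : ωinv t / t ≤ (1 - U) / (1 - V) := by
    rw [← ht_eq] at ht_pos ⊢
    gcongr
    rw [ht_eq]; exact hωinvt
  have hK : ωinv s / s ≤ (1 - U) / (1 - V) := hratio_app.trans hstep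
  have hhalf : (1/2 : ℝ) * (ωinv s / s) ≤ (1 - U) / (2 * (1 - V)) := by
    have h2 : (1/2 : ℝ) * (ωinv s / s) ≤ (1/2) * ((1 - U) / (1 - V)) :=
      mul_le_mul_of_nonneg_left hK (by norm_num)
    have h1Vne : (1 - V) ≠ 0 := by rw [ht_eq]; exact ne_of_gt ht_pos
    have h3 : (1/2 : ℝ) * ((1 - U) / (1 - V)) = (1 - U) / (2 * (1 - V)) := by
      field_simp
    linarith
  have hVl' : (-1:ℝ) < V := hVl
  have hVr' : V < 1 := hVr
  have e1 : (0:ℝ) ≤ 1 - U ^ 2 := by nlinarith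
  have e2 : 1 - U ≤ 1 - U ^ 2 := by nlinarith
  have e3 : (0:ℝ) < 1 - V ^ 2 := by nlinarith
  have e4 : 1 - V ^ 2 ≤ 2 * (1 - V) := by nlinarith
  have hfinal : (1 - U) / (2 * (1 - V)) ≤ (1 - U ^ 2) / (1 - V ^ 2) :=
    div_le_div₀ e1 e2 e3 e4
  calc (1/2 : ℝ) * (ωinv s / s) ≤ (1 - U) / (2 * (1 - V)) := hhalf
    _ ≤ (1 - U ^ 2) / (1 - V ^ 2) := hfinal
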